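/- Let f be a Lipschitz function on the torus 𝕋ⁿ for some n ∈ ℕ. For any δ > 0 and any non-resonant vector ω ∈ ℝⁿ (i.e. ω·k ≠ 0 for all k ∈ ℤⁿ \ {0}), there exists T₀ > 0 such that for every T ≥ T₀ one has |(1/T)∫₀^T f(x₀ + ωt) dt − ⟨f⟩| ≤ δ uniformly in x₀ ∈ 𝕋ⁿ, where ⟨f⟩ = ∫_{𝕋ⁿ} f(x) dx is the average of f with respect to the normalized Haar measure on 𝕋ⁿ. -/

import Mathlib

open Real MeasureTheory Filter Topology Set intervalIntegral

noncomputable section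

namespace Statement7Aux

open AddCircle Submodule ContinuousMap

instance : IsProbabilityMeasure (volume : Measure (AddCircle (1:ℝ))) :=
  ⟨by simp⟩

variable {n : ℕ}

/-- The character on the torus with frequency vector `k`. -/
def ek (n : ℕ) (k : Fin n → ℤ) : C(Fin n → AddCircle (1:ℝ), ℂ) :=
  ∏ i, (fourier (k i)).comp ⟨fun x => x i, continuous_apply i⟩

lemma ek_apply (k : Fin n → ℤ) (x : Fin n → AddCircle (1:ℝ)) :
    ek n k x = ∏ i, fourier (k i) (x i) := by
  simp [ek, ContinuousMap.prod_apply]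

lemma fourier_add_pt {T : ℝ} {m : ℤ} (x y : AddCircle T) :
    fourier m (x + y) = fourier m x * fourier m y := by
  simp_rw [fourier_apply, zsmul_add, toCircle_add, Circle.coe_mul]

lemma ek_zero : ek n 0 = 1 := by
  ext x
  simp [ek_apply, fourier_zero]

lemma ek_mul (k l : Fin n → ℤ) : ek n k * ek n l = ek n (k + l) := by
  ext x
  simp only [ContinuousMap.mul_apply, ek_apply, Pi.add_apply, fourier_add,
    Finset.prod_mul_distrib]

lemma star_ek (k : Fin n → ℤ) : star (ek n k) = ek n (-k) := by
  ext x
  simp only [star_apply, ek_apply, Pi.neg_apply, star_prod, RCLike.star_def, ← fourier_neg]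

lemma norm_ek_apply (k : Fin n → ℤ) (x : Fin n → AddCircle (1:ℝ)) :
    ‖ek n k x‖ = 1 := by
  rw [ek_apply, norm_prod]
  exact Finset.prod_eq_one fun i _ => Circle.norm_coe _

/-- The star subalgebra generated by the characters. -/
def tA (n : ℕ) : StarSubalgebra ℂ C(Fin n → AddCircle (1:ℝ), ℂ) where
  toSubalgebra := Algebra.adjoin ℂ (Set.range (ek n))
  star_mem' := by
    show Algebra.adjoin ℂ (Set.range (ek n)) ≤ star (Algebra.adjoin ℂ (Set.range (ek n)))
    refine Algebra.adjoin_le ?_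
    rintro - ⟨k, rfl⟩
    exact Algebra.subset_adjoin ⟨-k, (star_ek k).symm⟩

lemma ek_single (i : Fin n) (z : Fin n → AddCircle (1:ℝ)) :
    ek n (Pi.single i 1) z = fourier 1 (z i) := by
  rw [ek_apply, Finset.prod_eq_single i]
  · rw [Pi.single_eq_same]
  · intro j _ hj
    rw [Pi.single_eq_of_ne hj, fourier_zero]
  · exact fun h => absurd (Finset.mem_univ i) h

lemma tA_sep : (tA n).SeparatesPoints := by
  intro x y hxy
  obtain ⟨i, hi⟩ : ∃ i, x i ≠ y i := by
    by_contra h; push_neg at h; exact hxy (funext h)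
  refine ⟨_, ⟨ek n (Pi.single i 1), Algebra.subset_adjoin ⟨_, rfl⟩, rfl⟩, ?_⟩
  dsimp only
  rw [ek_single, ek_single]
  simp_rw [fourier_one]
  intro h
  exact hi (injective_toCircle one_ne_zero (Subtype.coe_inj.mp h))

lemma tA_coe :
    Subalgebra.toSubmodule (tA n).toSubalgebra = span ℂ (Set.range (ek n)) := by
  apply Algebra.adjoin_eq_span_of_subset
  refine Subset.trans ?_ Submodule.subset_span
  intro x hx
  refine Submonoid.closure_induction (fun _ => id) ⟨0, ek_zero⟩ ?_ hx
  rintro - - - - ⟨k, rfl⟩ ⟨l, rfl⟩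
  exact ⟨k + l, (ek_mul k l).symm⟩

lemma tA_closure : (tA n).topologicalClosure = ⊤ :=
  ContinuousMap.starSubalgebra_topologicalClosure_eq_top_of_separatesPoints _ tA_sep

lemma span_ek_closure :
    (span ℂ (Set.range (ek n))).topologicalClosure = ⊤ := by
  rw [← tA_coe]
  exact congr_arg (Subalgebra.toSubmodule <| StarSubalgebra.toSubalgebra ·) tA_closure

lemma integral_fourier (m : ℤ) (hm : m ≠ 0) :
    ∫ z : AddCircle (1:ℝ), fourier m z = 0 :=
  integral_eq_zero_of_add_right_eq_neg (fourier_add_half_inv_index hm one_pos)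

lemma integral_ek {k : Fin n → ℤ} (hk : k ≠ 0) :
    ∫ x : Fin n → AddCircle (1:ℝ), ek n k x = 0 := by
  simp_rw [ek_apply]
  rw [volume_pi, MeasureTheory.integral_fintype_prod_eq_prod (ι := Fin n) (fun i z => fourier (k i) z)]
  obtain ⟨i, hi⟩ : ∃ i, k i ≠ 0 := by
    by_contra h; push_neg at h; exact hk (funext h)
  exact Finset.prod_eq_zero (Finset.mem_univ i) (integral_fourier _ hi)

variable (ω : Fin n → ℝ)

lemma path_cont (x₀ : Fin n → AddCircle (1:ℝ)) :
    Continuous (fun t : ℝ => (fun i => x₀ i + ((t * ω i : ℝ) : AddCircle (1:ℝ)))) :=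
  continuous_pi fun i => continuous_const.add
    ((AddCircle.continuous_mk' 1).comp (continuous_id.mul continuous_const))

lemma ek_path (k : Fin n → ℤ) (x₀ : Fin n → AddCircle (1:ℝ)) (t : ℝ) :
    ek n k (fun i => x₀ i + ((t * ω i : ℝ) : AddCircle (1:ℝ)))
      = ek n k x₀ *
        Complex.exp (((2 * π * (∑ i, (k i : ℝ) * ω i) : ℝ) : ℂ) * Complex.I * t) := by
  rw [ek_apply]
  calc
    ∏ i, fourier (k i) (x₀ i + ((t * ω i : ℝ) : AddCircle (1:ℝ)))
        = ∏ i, (fourier (k i) (x₀ i) *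
            fourier (k i) ((t * ω i : ℝ) : AddCircle (1:ℝ))) := by
          exact Finset.prod_congr rfl fun i _ => fourier_add_pt _ _
    _ = (∏ i, fourier (k i) (x₀ i)) *
          ∏ i, Complex.exp (2 * π * Complex.I * (k i) * ((t * ω i : ℝ) : ℂ) / ((1:ℝ) : ℂ)) := by
          rw [Finset.prod_mul_distrib]
          congr 1
          exact Finset.prod_congr rfl fun i _ => fourier_coe_apply
    _ = ek n k x₀ *
          Complex.exp (((2 * π * (∑ i, (k i : ℝ) * ω i) : ℝ) : ℂ) * Complex.I * t) := by
          rw [← Complex.exp_sum, ← ek_apply]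
          congr 1
          have h : ∀ i : Fin n,
              2 * (π : ℂ) * Complex.I * (k i) * ((t * ω i : ℝ) : ℂ) / ((1:ℝ) : ℂ)
                = (2 * (π : ℂ) * Complex.I * t) * ((k i : ℂ) * (ω i : ℂ)) := by
            intro i; push_cast; ring
          rw [Finset.sum_congr rfl fun i _ => h i, ← Finset.mul_sum]
          push_cast
          ring

lemma key (hω : ∀ k : Fin n → ℤ, k ≠ 0 → (∑ i, (k i : ℝ) * ω i) ≠ 0)
    (g : C(Fin n → AddCircle (1:ℝ), ℂ)) (hg : g ∈ span ℂ (Set.range (ek n))) :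
    ∃ C : ℝ, 0 ≤ C ∧ ∀ T > (0:ℝ), ∀ x₀ : Fin n → AddCircle (1:ℝ),
      ‖(1 / (T:ℂ)) * (∫ t in (0:ℝ)..T, g (fun i => x₀ i + ((t * ω i : ℝ) : AddCircle (1:ℝ))))
        - ∫ x, g x‖ ≤ C / T := by
  induction hg using Submodule.span_induction with
  | mem g hg =>
    obtain ⟨k, rfl⟩ := hg
    by_cases hk : k = 0
    · subst hk
      refine ⟨0, le_refl 0, fun T hT x₀ => ?_⟩
      rw [ek_zero]
      simp only [ContinuousMap.one_apply]
      rw [intervalIntegral.integral_const, MeasureTheory.integral_const]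
      simp only [measure_univ, probReal_univ, ENNReal.toReal_one, one_smul, sub_zero, Complex.real_smul,
        mul_one]
      rw [one_div, inv_mul_cancel₀ (Complex.ofReal_ne_zero.mpr hT.ne'), sub_self, norm_zero,
        zero_div]
    · set a : ℝ := 2 * π * (∑ i, (k i : ℝ) * ω i) with ha_def
      have ha : a ≠ 0 := by
        apply mul_ne_zero (mul_ne_zero two_ne_zero Real.pi_ne_zero) (hω k hk)
      set c : ℂ := (a : ℂ) * Complex.I with hc_def
      have hc : c ≠ 0 :=
        mul_ne_zero (Complex.ofReal_ne_zero.mpr ha) Complex.I_ne_zero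
      refine ⟨2 / |a|, by positivity, fun T hT x₀ => ?_⟩
      have hint : (∫ t in (0:ℝ)..T,
          ek n k (fun i => x₀ i + ((t * ω i : ℝ) : AddCircle (1:ℝ))))
          = ek n k x₀ * ((Complex.exp (c * T) - Complex.exp (c * ((0:ℝ):ℂ))) / c) := by
        have : ∀ t : ℝ, ek n k (fun i => x₀ i + ((t * ω i : ℝ) : AddCircle (1:ℝ)))
            = ek n k x₀ * Complex.exp (c * t) := by
          intro t
          rw [ek_path ω k x₀ t]
        simp_rw [this]
        rw [intervalIntegral.integral_const_mul, integral_exp_mul_complex hc]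
      rw [hint, integral_ek hk, sub_zero]
      have hnorm_exp : ‖Complex.exp (c * T)‖ = 1 := by
        rw [show c * (T:ℂ) = ((a * T : ℝ) : ℂ) * Complex.I by push_cast; ring]
        exact Complex.norm_exp_ofReal_mul_I _
      have hnorm_diff : ‖Complex.exp (c * T) - Complex.exp (c * ((0:ℝ):ℂ))‖ ≤ 2 := by
        refine (norm_sub_le _ _).trans ?_
        rw [hnorm_exp, Complex.ofReal_zero, mul_zero, Complex.exp_zero, norm_one]
        norm_num
      have hnc : ‖c‖ = |a| := by
        rw [hc_def, norm_mul, Complex.norm_I, mul_one, Complex.norm_real, Real.norm_eq_abs]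
      have heq : ‖(1 / (T:ℂ)) * (ek n k x₀ *
          ((Complex.exp (c * T) - Complex.exp (c * ((0:ℝ):ℂ))) / c))‖
          = (1 / T) * (‖Complex.exp (c * T) - Complex.exp (c * ((0:ℝ):ℂ))‖ / |a|) := by
        simp only [norm_mul, norm_div, norm_one, norm_ek_apply, one_mul, hnc,
          Complex.norm_real, Real.norm_eq_abs]
        rw [abs_of_pos hT]
      rw [heq]
      calc (1 / T) * (‖Complex.exp (c * T) - Complex.exp (c * ((0:ℝ):ℂ))‖ / |a|)
          ≤ (1 / T) * (2 / |a|) := by gcongr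
        _ = (2 / |a|) / T := by ring
  | zero =>
    refine ⟨0, le_refl 0, fun T hT x₀ => ?_⟩
    simp only [ContinuousMap.zero_apply, intervalIntegral.integral_zero, mul_zero,
      MeasureTheory.integral_zero, sub_zero, norm_zero, zero_div, le_refl]
  | add g₁ g₂ hg₁ hg₂ ih₁ ih₂ =>
    obtain ⟨C₁, hC₁0, hC₁⟩ := ih₁
    obtain ⟨C₂, hC₂0, hC₂⟩ := ih₂
    refine ⟨C₁ + C₂, by positivity, fun T hT x₀ => ?_⟩
    have int1 : IntervalIntegrable
        (fun t => g₁ (fun i => x₀ i + ((t * ω i : ℝ) : AddCircle (1:ℝ)))) volume 0 T :=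
      (g₁.continuous.comp (path_cont ω x₀)).intervalIntegrable _ _
    have int2 : IntervalIntegrable
        (fun t => g₂ (fun i => x₀ i + ((t * ω i : ℝ) : AddCircle (1:ℝ)))) volume 0 T :=
      (g₂.continuous.comp (path_cont ω x₀)).intervalIntegrable _ _
    have igl1 : Integrable (fun x => g₁ x) (volume : Measure (Fin n → AddCircle (1:ℝ))) :=
      g₁.continuous.integrable_of_hasCompactSupport (HasCompactSupport.of_compactSpace _)
    have igl2 : Integrable (fun x => g₂ x) (volume : Measure (Fin n → AddCircle (1:ℝ))) :=
      g₂.continuous.integrable_of_hasCompactSupport (HasCompactSupport.of_compactSpace _)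
    have hsplit :
        (1 / (T:ℂ)) * (∫ t in (0:ℝ)..T,
            (g₁ + g₂) (fun i => x₀ i + ((t * ω i : ℝ) : AddCircle (1:ℝ))))
          - ∫ x, (g₁ + g₂) x
        = ((1 / (T:ℂ)) * (∫ t in (0:ℝ)..T,
            g₁ (fun i => x₀ i + ((t * ω i : ℝ) : AddCircle (1:ℝ)))) - ∫ x, g₁ x)
          + ((1 / (T:ℂ)) * (∫ t in (0:ℝ)..T,
            g₂ (fun i => x₀ i + ((t * ω i : ℝ) : AddCircle (1:ℝ)))) - ∫ x, g₂ x) := by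
      simp only [ContinuousMap.add_apply]
      rw [intervalIntegral.integral_add int1 int2, MeasureTheory.integral_add igl1 igl2]
      ring
    rw [hsplit]
    calc ‖_ + _‖ ≤ _ + _ := norm_add_le _ _
      _ ≤ C₁ / T + C₂ / T := add_le_add (hC₁ T hT x₀) (hC₂ T hT x₀)
      _ = (C₁ + C₂) / T := (add_div _ _ _).symm
  | smul b g hg ih =>
    obtain ⟨C, hC0, hC⟩ := ih
    refine ⟨‖b‖ * C, by positivity, fun T hT x₀ => ?_⟩
    have hsplit :
        (1 / (T:ℂ)) * (∫ t in (0:ℝ)..T,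
            (b • g) (fun i => x₀ i + ((t * ω i : ℝ) : AddCircle (1:ℝ))))
          - ∫ x, (b • g) x
        = b * ((1 / (T:ℂ)) * (∫ t in (0:ℝ)..T,
            g (fun i => x₀ i + ((t * ω i : ℝ) : AddCircle (1:ℝ)))) - ∫ x, g x) := by
      simp only [ContinuousMap.smul_apply, smul_eq_mul]
      rw [intervalIntegral.integral_const_mul, MeasureTheory.integral_const_mul]
      ring
    rw [hsplit, norm_mul]
    calc ‖b‖ * ‖_‖ ≤ ‖b‖ * (C / T) :=
          mul_le_mul_of_nonneg_left (hC T hT x₀) (norm_nonneg _)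
      _ = ‖b‖ * C / T := (mul_div_assoc _ _ _).symm

end Statement7Aux

open Statement7Aux

/-- Lemma 2.3, a version of the classical Weyl theorem.
Let f be a Lipschitz function on the torus 𝕋ⁿ = (ℝ/ℤ)ⁿ, equipped with its normalized
Haar measure, and let ω ∈ ℝⁿ be non-resonant (ω·k ≠ 0 for all k ∈ ℤⁿ \ {0}).  Then for
any δ > 0 there exists T₀ > 0 such that for all T ≥ T₀ and all x₀ ∈ 𝕋ⁿ,
|(1/T)∫₀^T f(x₀ + ωt) dt − ∫_{𝕋ⁿ} f| ≤ δ. -/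
theorem statement_7
    (n : ℕ) (hn : 0 < n)
    (f : (Fin n → AddCircle (1:ℝ)) → ℝ) (K : NNReal) (hf : LipschitzWith K f)
    (ω : Fin n → ℝ)
    (hω : ∀ k : Fin n → ℤ, k ≠ 0 → (∑ i, (k i : ℝ) * ω i) ≠ 0)
    (δ : ℝ) (hδ : 0 < δ) :
    ∃ T₀ > (0:ℝ), ∀ T ≥ T₀, ∀ x₀ : Fin n → AddCircle (1:ℝ),
      |(1 / T) * (∫ t in (0:ℝ)..T, f (fun i => x₀ i + ((t * ω i : ℝ) : AddCircle (1:ℝ))))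
        - ∫ x, f x| ≤ δ := by
  classical
  have hε : (0:ℝ) < δ / 3 := by positivity
  set F : C(Fin n → AddCircle (1:ℝ), ℂ) :=
    ⟨fun x => (f x : ℂ), Complex.continuous_ofReal.comp hf.continuous⟩ with hF_def
  have hFmem : F ∈ closure ((Submodule.span ℂ (Set.range (ek n)) :
      Submodule ℂ C(Fin n → AddCircle (1:ℝ), ℂ)) : Set _) := by
    rw [← Submodule.topologicalClosure_coe, span_ek_closure]
    simp
  obtain ⟨g, hgmem, hdist⟩ := Metric.mem_closure_iff.mp hFmem (δ / 3) hε
  obtain ⟨C, hC0, hC⟩ := key ω hω g hgmem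
  refine ⟨max 1 (C / (δ / 3)), lt_of_lt_of_le one_pos (le_max_left _ _), fun T hT x₀ => ?_⟩
  have hT1 : (1:ℝ) ≤ T := le_trans (le_max_left _ _) hT
  have hTpos : (0:ℝ) < T := lt_of_lt_of_le one_pos hT1
  have intF : IntervalIntegrable
      (fun t => F (fun i => x₀ i + ((t * ω i : ℝ) : AddCircle (1:ℝ)))) volume 0 T :=
    (F.continuous.comp (path_cont ω x₀)).intervalIntegrable _ _
  have intg : IntervalIntegrable
      (fun t => g (fun i => x₀ i + ((t * ω i : ℝ) : AddCircle (1:ℝ)))) volume 0 T :=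
    (g.continuous.comp (path_cont ω x₀)).intervalIntegrable _ _
  have iF : Integrable (fun x => F x) (volume : Measure (Fin n → AddCircle (1:ℝ))) :=
    F.continuous.integrable_of_hasCompactSupport (HasCompactSupport.of_compactSpace _)
  have ig : Integrable (fun x => g x) (volume : Measure (Fin n → AddCircle (1:ℝ))) :=
    g.continuous.integrable_of_hasCompactSupport (HasCompactSupport.of_compactSpace _)
  have hbound : ∀ y : Fin n → AddCircle (1:ℝ), ‖F y - g y‖ ≤ δ / 3 := by
    intro y
    calc ‖F y - g y‖ = ‖(F - g) y‖ := by simp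
      _ ≤ ‖F - g‖ := ContinuousMap.norm_coe_le_norm _ _
      _ = dist F g := (dist_eq_norm F g).symm
      _ ≤ δ / 3 := hdist.le
  -- pass to complex norms
  rw [← Real.norm_eq_abs, ← Complex.norm_real]
  have ecast : ((((1 / T) * (∫ t in (0:ℝ)..T,
        f (fun i => x₀ i + ((t * ω i : ℝ) : AddCircle (1:ℝ)))) - ∫ x, f x : ℝ)) : ℂ)
      = (1 / (T:ℂ)) * (∫ t in (0:ℝ)..T,
          F (fun i => x₀ i + ((t * ω i : ℝ) : AddCircle (1:ℝ)))) - ∫ x, F x := by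
    have e1 : ((∫ t in (0:ℝ)..T,
        f (fun i => x₀ i + ((t * ω i : ℝ) : AddCircle (1:ℝ))) : ℝ) : ℂ)
        = ∫ t in (0:ℝ)..T, F (fun i => x₀ i + ((t * ω i : ℝ) : AddCircle (1:ℝ))) :=
      (intervalIntegral.integral_ofReal (f := fun t =>
        f (fun i => x₀ i + ((t * ω i : ℝ) : AddCircle (1:ℝ))))).symm
    have e2 : ((∫ x, f x : ℝ) : ℂ) = ∫ x, F x := (integral_ofReal (f := f)).symm
    push_cast [← e1, ← e2]
    ring
  rw [ecast]
  -- split into three pieces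
  have split : (1 / (T:ℂ)) * (∫ t in (0:ℝ)..T,
        F (fun i => x₀ i + ((t * ω i : ℝ) : AddCircle (1:ℝ)))) - ∫ x, F x
      = ((1 / (T:ℂ)) * (∫ t in (0:ℝ)..T,
          (F (fun i => x₀ i + ((t * ω i : ℝ) : AddCircle (1:ℝ)))
            - g (fun i => x₀ i + ((t * ω i : ℝ) : AddCircle (1:ℝ))))))
        + ((1 / (T:ℂ)) * (∫ t in (0:ℝ)..T,
          g (fun i => x₀ i + ((t * ω i : ℝ) : AddCircle (1:ℝ)))) - ∫ x, g x)
        + ((∫ x, g x) - ∫ x, F x) := by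
    rw [intervalIntegral.integral_sub intF intg]
    ring
  rw [split]
  have b1 : ‖(1 / (T:ℂ)) * (∫ t in (0:ℝ)..T,
      (F (fun i => x₀ i + ((t * ω i : ℝ) : AddCircle (1:ℝ)))
        - g (fun i => x₀ i + ((t * ω i : ℝ) : AddCircle (1:ℝ)))))‖ ≤ δ / 3 := by
    rw [norm_mul]
    have h1 : ‖(1 / (T:ℂ))‖ = 1 / T := by
      rw [norm_div, norm_one, Complex.norm_real, Real.norm_eq_abs, abs_of_pos hTpos]
    have h2 : ‖∫ t in (0:ℝ)..T,
        (F (fun i => x₀ i + ((t * ω i : ℝ) : AddCircle (1:ℝ)))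
          - g (fun i => x₀ i + ((t * ω i : ℝ) : AddCircle (1:ℝ))))‖ ≤ (δ / 3) * |T - 0| :=
      intervalIntegral.norm_integral_le_of_norm_le_const fun t _ => hbound _
    rw [h1]
    calc (1 / T) * ‖_‖ ≤ (1 / T) * ((δ / 3) * |T - 0|) := by
          exact mul_le_mul_of_nonneg_left h2 (by positivity)
      _ = δ / 3 := by
          rw [sub_zero, abs_of_pos hTpos]
          field_simp
  have b2 : ‖(1 / (T:ℂ)) * (∫ t in (0:ℝ)..T,
      g (fun i => x₀ i + ((t * ω i : ℝ) : AddCircle (1:ℝ)))) - ∫ x, g x‖ ≤ δ / 3 := by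
    refine (hC T hTpos x₀).trans ?_
    rw [div_le_iff₀ hTpos]
    have hT' : C / (δ / 3) ≤ T := le_trans (le_max_right _ _) hT
    calc C = (δ / 3) * (C / (δ / 3)) := by field_simp
      _ ≤ (δ / 3) * T := by gcongr
  have b3 : ‖(∫ x, g x) - ∫ x, F x‖ ≤ δ / 3 := by
    rw [← integral_sub ig iF]
    have := MeasureTheory.norm_integral_le_of_norm_le_const
      (μ := (volume : Measure (Fin n → AddCircle (1:ℝ))))
      (f := fun x => g x - F x) (C := δ / 3) ?_
    · simpa [measure_univ] using this
    · filter_upwards with x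
      rw [norm_sub_rev]
      exact hbound x
  calc ‖_ + _ + _‖ ≤ ‖_ + _‖ + ‖_‖ := norm_add_le _ _
    _ ≤ ‖_‖ + ‖_‖ + ‖_‖ := by gcongr; exact norm_add_le _ _
    _ ≤ δ / 3 + δ / 3 + δ / 3 := by
        exact add_le_add (add_le_add b1 b2) b3
    _ = δ := by ring
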